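/- Let X be a compact Hausdorff space and υ : C(X,I) → I satisfying υ(1_X)=1, υ(λφ)=λυ(φ) for λ ∈ I, and υ(max(φ,ψ))=max{υ(φ),υ(ψ)}. Let ν(A) = inf{υ(χ) : χ ∈ C(X,I), χ ≡ 1 on A} for closed nonempty A, ν(∅)=0. Then for every φ ∈ C(X,I): sup{ν(φ^{-1}([t,1])) · t : t ∈ (0,1]} = υ(φ). In particular, every such functional is represented by a possibility capacity via the max-product fuzzy integral. -/

import Mathlib

open Set TopologicalSpace
open scoped Classical

/-- An upper-semicontinuous capacity on a topological space `X`: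
a monotone set function on closed sets with values in `[0,1]`,
`ν ∅ = 0`, `ν X = 1`, and upper semicontinuity. -/
structure Capacity (X : Type*) [TopologicalSpace X] where
  toFun : Set X → ℝ
  nonneg : ∀ A : Set X, 0 ≤ toFun A
  le_one : ∀ A : Set X, toFun A ≤ 1
  empty' : toFun ∅ = 0
  univ' : toFun Set.univ = 1
  mono : ∀ ⦃A B : Set X⦄, IsClosed A → IsClosed B → A ⊆ B → toFun A ≤ toFun B
  usc : ∀ ⦃F : Set X⦄ ⦃a : ℝ⦄, IsClosed F → toFun F < a →
    ∃ U : Set X, IsOpen U ∧ F ⊆ U ∧ ∀ ⦃K : Set X⦄, IsCompact K → K ⊆ U → toFun K < a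

/-- `ν` is a possibility capacity: `ν (A ∪ B) = max (ν A) (ν B)` for closed `A`, `B`. -/
def IsPossibility {X : Type*} [TopologicalSpace X] (ν : Capacity X) : Prop :=
  ∀ ⦃A B : Set X⦄, IsClosed A → IsClosed B →
    ν.toFun (A ∪ B) = max (ν.toFun A) (ν.toFun B)


/-- The capacity induced by a functional: ν(A) = inf of u over functions equal to 1 on A. -/
noncomputable def nuOf {X : Type*} [TopologicalSpace X] (u : C(X, ℝ) → ℝ) (A : Set X) : ℝ :=
  if A = ∅ then 0
  else sInf (u '' {φ : C(X, ℝ) | (∀ x, φ x ∈ Set.Icc (0:ℝ) 1) ∧ ∀ a ∈ A, φ a = 1})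

/-- Every normalized, homogeneous, maxitive functional is represented by its induced
capacity via the max-product fuzzy integral. -/
theorem stmt16 {X : Type*} [TopologicalSpace X] [CompactSpace X] [T2Space X]
    (u : C(X, ℝ) → ℝ)
    (h1 : u (ContinuousMap.const X 1) = 1)
    (h2 : ∀ l : ℝ, l ∈ Set.Icc (0:ℝ) 1 → ∀ φ : C(X, ℝ),
      (∀ x, φ x ∈ Set.Icc (0:ℝ) 1) → u (l • φ) = l * u φ)
    (h3 : ∀ φ ψ : C(X, ℝ), (∀ x, φ x ∈ Set.Icc (0:ℝ) 1) → (∀ x, ψ x ∈ Set.Icc (0:ℝ) 1) →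
      u (φ ⊔ ψ) = max (u φ) (u ψ)) :
    ∀ φ : C(X, ℝ), (∀ x, φ x ∈ Set.Icc (0:ℝ) 1) →
      sSup ((fun t => nuOf u {x : X | t ≤ φ x} * t) '' Set.Ioc (0:ℝ) 1) = u φ := by
  -- basic facts about u
  have hI1 : ∀ x : X, (ContinuousMap.const X (1:ℝ)) x ∈ Set.Icc (0:ℝ) 1 := by
    intro x; simp
  have hI0 : ∀ x : X, (0 : C(X,ℝ)) x ∈ Set.Icc (0:ℝ) 1 := by
    intro x; simp
  have hu0 : u 0 = 0 := by
    have := h2 0 ⟨le_refl 0, zero_le_one⟩ (ContinuousMap.const X 1) hI1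
    simpa using this
  have hmono : ∀ f g : C(X,ℝ), (∀ x, f x ∈ Set.Icc (0:ℝ) 1) →
      (∀ x, g x ∈ Set.Icc (0:ℝ) 1) → (∀ x, f x ≤ g x) → u f ≤ u g := by
    intro f g hf hg hfg
    have h := h3 f g hf hg
    rw [sup_eq_right.mpr (ContinuousMap.le_def.mpr hfg)] at h
    rw [h]; exact le_max_left _ _
  have hnonneg : ∀ f : C(X,ℝ), (∀ x, f x ∈ Set.Icc (0:ℝ) 1) → 0 ≤ u f := by
    intro f hf
    have := hmono 0 f hI0 hf (fun x => by simpa using (hf x).1)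
    simpa [hu0] using this
  have hle1 : ∀ f : C(X,ℝ), (∀ x, f x ∈ Set.Icc (0:ℝ) 1) → u f ≤ 1 := by
    intro f hf
    have := hmono f (ContinuousMap.const X 1) hf hI1 (fun x => by simpa using (hf x).2)
    rwa [h1] at this
  have hconst : ∀ l : ℝ, l ∈ Set.Icc (0:ℝ) 1 → u (ContinuousMap.const X l) = l := by
    intro l hl
    have he : ContinuousMap.const X l = l • ContinuousMap.const X 1 := by
      ext x; simp
    rw [he, h2 l hl _ hI1, h1, mul_one]
  -- facts about nuOf
  have hnu_empty : ∀ A : Set X, A = ∅ → nuOf u A = 0 := fun A hA => if_pos hA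
  have hnu_def : ∀ A : Set X, A ≠ ∅ → nuOf u A =
      sInf (u '' {ψ : C(X, ℝ) | (∀ x, ψ x ∈ Set.Icc (0:ℝ) 1) ∧ ∀ a ∈ A, ψ a = 1}) :=
    fun A hA => if_neg hA
  have hnu_le : ∀ (A : Set X) (χ : C(X,ℝ)), (∀ x, χ x ∈ Set.Icc (0:ℝ) 1) →
      (∀ a ∈ A, χ a = 1) → nuOf u A ≤ u χ := by
    intro A χ hχI hχ1
    by_cases hA : A = ∅
    · rw [hnu_empty A hA]; exact hnonneg χ hχI
    · rw [hnu_def A hA]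
      refine csInf_le ⟨0, ?_⟩ ⟨χ, ⟨hχI, hχ1⟩, rfl⟩
      rintro y ⟨ψ, ⟨hψI, _⟩, rfl⟩
      exact hnonneg ψ hψI
  have hnu_nonneg : ∀ A : Set X, 0 ≤ nuOf u A := by
    intro A
    by_cases hA : A = ∅
    · rw [hnu_empty A hA]
    · rw [hnu_def A hA]
      refine le_csInf ⟨u (ContinuousMap.const X 1),
        ⟨ContinuousMap.const X 1, ⟨hI1, fun a _ => by simp⟩, rfl⟩⟩ ?_
      rintro y ⟨ψ, ⟨hψI, _⟩, rfl⟩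
      exact hnonneg ψ hψI
  have hnu_le_one : ∀ A : Set X, nuOf u A ≤ 1 := by
    intro A
    have := hnu_le A (ContinuousMap.const X 1) hI1 (fun a _ => by simp)
    rwa [h1] at this
  have hnu_exists : ∀ (A : Set X), A ≠ ∅ → ∀ ε : ℝ, 0 < ε →
      ∃ χ : C(X,ℝ), (∀ x, χ x ∈ Set.Icc (0:ℝ) 1) ∧ (∀ a ∈ A, χ a = 1) ∧
        u χ < nuOf u A + ε := by
    intro A hA ε hε
    have hne : (u '' {ψ : C(X,ℝ) | (∀ x, ψ x ∈ Set.Icc (0:ℝ) 1) ∧ ∀ a ∈ A, ψ a = 1}).Nonempty :=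
      ⟨u (ContinuousMap.const X 1), ContinuousMap.const X 1, ⟨hI1, fun a _ => by simp⟩, rfl⟩
    have hlt : sInf (u '' {ψ : C(X,ℝ) | (∀ x, ψ x ∈ Set.Icc (0:ℝ) 1) ∧ ∀ a ∈ A, ψ a = 1})
        < nuOf u A + ε := by
      rw [hnu_def A hA]; linarith
    obtain ⟨y, ⟨χ, ⟨hχI, hχ1⟩, rfl⟩, hy⟩ := exists_lt_of_csInf_lt hne hlt
    exact ⟨χ, hχI, hχ1, hy⟩
  -- main proof
  intro φ hφ
  set T : Set ℝ := (fun t => nuOf u {x : X | t ≤ φ x} * t) '' Set.Ioc (0:ℝ) 1 with hT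
  have hT_ne : T.Nonempty := ⟨_, 1, ⟨zero_lt_one, le_refl 1⟩, rfl⟩
  have hT_bdd : BddAbove T := by
    refine ⟨1, ?_⟩
    rintro y ⟨t, ht, rfl⟩
    calc nuOf u {x : X | t ≤ φ x} * t ≤ 1 * 1 := by
          apply mul_le_mul (hnu_le_one _) ht.2 ht.1.le zero_le_one
      _ = 1 := by norm_num
  set s : ℝ := sSup T with hs
  have hs_nonneg : 0 ≤ s := by
    have h0 : nuOf u {x : X | (1:ℝ) ≤ φ x} * 1 ∈ T := ⟨1, ⟨zero_lt_one, le_refl 1⟩, rfl⟩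
    have := le_csSup hT_bdd h0
    have h1' : 0 ≤ nuOf u {x : X | (1:ℝ) ≤ φ x} * 1 := by
      simpa using hnu_nonneg {x : X | (1:ℝ) ≤ φ x}
    linarith
  -- direction 1 : sSup T ≤ u φ
  have dir1 : s ≤ u φ := by
    refine csSup_le hT_ne ?_
    rintro y ⟨t, ht, rfl⟩
    show nuOf u {x : X | t ≤ φ x} * t ≤ u φ
    set A : Set X := {x : X | t ≤ φ x} with hA
    by_cases hAe : A = ∅
    · rw [hnu_empty A hAe, zero_mul]; exact hnonneg φ hφ
    · set χ : C(X,ℝ) := ⟨fun x => min (φ x / t) 1,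
        Continuous.min (φ.continuous.div_const t) continuous_const⟩ with hχ
      have hχI : ∀ x, χ x ∈ Set.Icc (0:ℝ) 1 := by
        intro x
        exact ⟨le_min (div_nonneg (hφ x).1 ht.1.le) zero_le_one, min_le_right _ _⟩
      have hχ1 : ∀ a ∈ A, χ a = 1 := by
        intro a ha
        have : (1:ℝ) ≤ φ a / t := (one_le_div ht.1).mpr ha
        exact min_eq_right this
      have htI : t ∈ Set.Icc (0:ℝ) 1 := ⟨ht.1.le, ht.2⟩
      have htχI : ∀ x, (t • χ) x ∈ Set.Icc (0:ℝ) 1 := by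
        intro x
        have := hχI x
        constructor
        · simpa using mul_nonneg ht.1.le this.1
        · simp only [ContinuousMap.smul_apply, smul_eq_mul]
          calc t * χ x ≤ 1 * 1 := mul_le_mul htI.2 this.2 this.1 zero_le_one
            _ = 1 := by norm_num
      have hle : ∀ x, (t • χ) x ≤ φ x := by
        intro x
        simp only [ContinuousMap.smul_apply, smul_eq_mul, hχ, ContinuousMap.coe_mk]
        have hmin : t * min (φ x / t) 1 = min (t * (φ x / t)) (t * 1) :=
          mul_min_of_nonneg _ _ ht.1.le
        have hcan : t * (φ x / t) = φ x := by rw [mul_comm]; exact div_mul_cancel₀ _ ht.1.ne'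
        rw [hmin, hcan]
        exact le_trans (min_le_left _ _) (le_refl _)
      have step1 : u (t • χ) ≤ u φ := hmono _ _ htχI hφ hle
      have step2 : u (t • χ) = t * u χ := h2 t htI χ hχI
      have step3 : nuOf u A ≤ u χ := hnu_le A χ hχI hχ1
      calc nuOf u A * t ≤ u χ * t := mul_le_mul_of_nonneg_right step3 ht.1.le
        _ = t * u χ := mul_comm _ _
        _ = u (t • χ) := step2.symm
        _ ≤ u φ := step1
  -- direction 2 : u φ ≤ sSup T
  have dir2 : u φ ≤ s := by
    -- Claim 1 : inductive approximation
    have claim1 : ∀ δ : ℝ, 0 < δ → δ < 1 → ∀ ε : ℝ, 0 < ε → ∀ n : ℕ,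
        ∃ g : C(X,ℝ), (∀ x, g x ∈ Set.Icc (0:ℝ) 1) ∧
          (∀ x, φ x ≤ max (g x) (δ ^ n)) ∧ u g ≤ δ⁻¹ * (s + ε) := by
      intro δ hδ0 hδ1 ε hε n
      induction n with
      | zero =>
        refine ⟨0, hI0, ?_, ?_⟩
        · intro x; simp [(hφ x).2]
        · rw [hu0]; positivity
      | succ n ih =>
        obtain ⟨g, hgI, hgφ, hgu⟩ := ih
        by_cases hAe : {x : X | δ ^ (n+1) ≤ φ x} = ∅
        · refine ⟨g, hgI, ?_, hgu⟩
          intro x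
          have hx : ¬ (δ ^ (n+1) ≤ φ x) := by
            intro h; exact absurd (Set.eq_empty_iff_forall_notMem.mp hAe x) (fun hc => hc h)
          exact le_max_of_le_right (le_of_not_ge hx)
        · obtain ⟨χ, hχI, hχ1, hχlt⟩ := hnu_exists _ hAe ε hε
          have hδnI : (δ ^ n : ℝ) ∈ Set.Icc (0:ℝ) 1 :=
            ⟨pow_nonneg hδ0.le n, pow_le_one₀ hδ0.le hδ1.le⟩
          have hsmI : ∀ x, ((δ ^ n : ℝ) • χ) x ∈ Set.Icc (0:ℝ) 1 := by
            intro x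
            have := hχI x
            constructor
            · simpa using mul_nonneg hδnI.1 this.1
            · simp only [ContinuousMap.smul_apply, smul_eq_mul]
              calc δ ^ n * χ x ≤ 1 * 1 := mul_le_mul hδnI.2 this.2 this.1 zero_le_one
                _ = 1 := by norm_num
          refine ⟨g ⊔ ((δ ^ n : ℝ) • χ), ?_, ?_, ?_⟩
          · intro x
            simp only [ContinuousMap.sup_apply]
            exact ⟨le_max_of_le_left (hgI x).1, max_le (hgI x).2 (hsmI x).2⟩
          · intro x
            by_cases hx : δ ^ (n+1) ≤ φ x
            · have hmem : x ∈ {x : X | δ ^ (n+1) ≤ φ x} := hx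
              rcases le_max_iff.mp (hgφ x) with h | h
              · exact le_max_of_le_left (by
                  simp only [ContinuousMap.sup_apply]; exact le_max_of_le_left h)
              · refine le_max_of_le_left ?_
                simp only [ContinuousMap.sup_apply, ContinuousMap.smul_apply, smul_eq_mul]
                rw [hχ1 x hmem, mul_one]
                exact le_max_of_le_right h
            · exact le_max_of_le_right (le_of_not_ge hx)
          · have hsum : u (g ⊔ ((δ ^ n : ℝ) • χ)) = max (u g) (u ((δ ^ n : ℝ) • χ)) :=
              h3 g _ hgI hsmI
            rw [hsum]
            refine max_le hgu ?_
            rw [h2 _ hδnI χ hχI]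
            have hmem : nuOf u {x : X | δ ^ (n+1) ≤ φ x} * δ ^ (n+1) ∈ T :=
              ⟨δ ^ (n+1), ⟨pow_pos hδ0 _, pow_le_one₀ hδ0.le hδ1.le⟩, rfl⟩
            have hsle : nuOf u {x : X | δ ^ (n+1) ≤ φ x} * δ ^ (n+1) ≤ s := le_csSup hT_bdd hmem
            have hkey : δ ^ n * nuOf u {x : X | δ ^ (n+1) ≤ φ x} ≤ δ⁻¹ * s := by
              have h' : δ⁻¹ * (nuOf u {x : X | δ ^ (n+1) ≤ φ x} * δ ^ (n+1)) ≤ δ⁻¹ * s :=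
                mul_le_mul_of_nonneg_left hsle (by positivity)
              calc δ ^ n * nuOf u {x : X | δ ^ (n+1) ≤ φ x}
                  = δ⁻¹ * (nuOf u {x : X | δ ^ (n+1) ≤ φ x} * δ ^ (n+1)) := by
                    field_simp; ring
                _ ≤ δ⁻¹ * s := h'
            have h1le : (1:ℝ) ≤ δ⁻¹ := by nlinarith [mul_inv_cancel₀ (ne_of_gt hδ0), inv_nonneg.mpr hδ0.le]
            calc δ ^ n * u χ ≤ δ ^ n * (nuOf u {x : X | δ ^ (n+1) ≤ φ x} + ε) :=
                  mul_le_mul_of_nonneg_left hχlt.le hδnI.1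
              _ = δ ^ n * nuOf u {x : X | δ ^ (n+1) ≤ φ x} + δ ^ n * ε := by ring
              _ ≤ δ⁻¹ * s + δ⁻¹ * ε := by
                  refine add_le_add hkey ?_
                  exact mul_le_mul (le_trans hδnI.2 h1le) (le_refl ε) hε.le (by positivity)
              _ = δ⁻¹ * (s + ε) := by ring
    -- Claim 2
    have claim2 : ∀ δ : ℝ, 0 < δ → δ < 1 → ∀ ε : ℝ, 0 < ε → u φ ≤ δ⁻¹ * (s + ε) := by
      intro δ hδ0 hδ1 ε hε
      have key : ∀ n : ℕ, u φ ≤ max (δ⁻¹ * (s + ε)) (δ ^ n) := by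
        intro n
        obtain ⟨g, hgI, hgφ, hgu⟩ := claim1 δ hδ0 hδ1 ε hε n
        have hδnI : (δ ^ n : ℝ) ∈ Set.Icc (0:ℝ) 1 :=
          ⟨pow_nonneg hδ0.le n, pow_le_one₀ hδ0.le hδ1.le⟩
        have hGI : ∀ x, (g ⊔ ContinuousMap.const X (δ ^ n)) x ∈ Set.Icc (0:ℝ) 1 := by
          intro x
          simp only [ContinuousMap.sup_apply, ContinuousMap.const_apply]
          exact ⟨le_max_of_le_left (hgI x).1, max_le (hgI x).2 hδnI.2⟩
        have hm : u φ ≤ u (g ⊔ ContinuousMap.const X (δ ^ n)) := by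
          refine hmono φ _ hφ hGI ?_
          intro x
          simpa [ContinuousMap.sup_apply] using hgφ x
        have heq : u (g ⊔ ContinuousMap.const X (δ ^ n)) = max (u g) (δ ^ n) := by
          rw [h3 g _ hgI (fun x => by simpa using hδnI), hconst _ hδnI]
        rw [heq] at hm
        exact le_trans hm (max_le_max hgu (le_refl _))
      by_contra hcon
      push_neg at hcon
      have hall : ∀ n : ℕ, u φ ≤ δ ^ n := by
        intro n
        rcases le_max_iff.mp (key n) with h | h
        · exact absurd h (not_le.mpr hcon)
        · exact h
      have hlim : Filter.Tendsto (fun n : ℕ => δ ^ n) Filter.atTop (nhds 0) :=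
        tendsto_pow_atTop_nhds_zero_of_lt_one hδ0.le hδ1
      have h0 : u φ ≤ 0 := ge_of_tendsto' hlim hall
      have hpos : 0 < δ⁻¹ * (s + ε) := by positivity
      linarith
    -- Claim 3
    have claim3 : ∀ δ : ℝ, 0 < δ → δ < 1 → δ * u φ ≤ s := by
      intro δ hδ0 hδ1
      refine le_of_forall_pos_le_add ?_
      intro ε hε
      have := claim2 δ hδ0 hδ1 ε hε
      have h' : δ * u φ ≤ δ * (δ⁻¹ * (s + ε)) := mul_le_mul_of_nonneg_left this hδ0.le
      calc δ * u φ ≤ δ * (δ⁻¹ * (s + ε)) := h'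
        _ = s + ε := by field_simp
    refine le_of_forall_pos_le_add ?_
    intro ε hε
    set δ : ℝ := max (1/2) (1 - ε) with hδ
    have hδ0 : 0 < δ := lt_of_lt_of_le (by norm_num) (le_max_left _ _)
    have hδ1 : δ < 1 := max_lt (by norm_num) (by linarith)
    have h3' := claim3 δ hδ0 hδ1
    have hδε : 1 - δ ≤ ε := by
      have : 1 - ε ≤ δ := le_max_right _ _
      linarith
    have hφ1 : u φ ≤ 1 := hle1 φ hφ
    have hφ0 : 0 ≤ u φ := hnonneg φ hφ
    nlinarith
  linarith
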